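/- Let (χ, μ) be a probability space, logit: ℝ^{d_h} × ℝ^{d_h} × ℝ^{d_p} → ℝ Lipschitz with constant L_logit (with respect to the sum of the Euclidean norms of the three arguments). Let h, ĥ: χ → ℝ^{d_h} and p, p̂: χ × χ → ℝ^{d_p} be bounded measurable, and for a pair (g, q) let Att_{g,q}(x,y) = exp(logit(g(x), g(y), q(x,y))) / ∫_χ exp(logit(g(x), g(z), q(x,z))) dμ(z). Define Δ(x,y) = ‖h(x) − ĥ(x)‖₂ + ‖h(y) − ĥ(y)‖₂ + ‖p(x,y) − p̂(x,y)‖₂ and assume sup_{x,y} Δ(x,y) ≤ 1/(2·L_logit). Then for all x, y ∈ χ: |Att_{ĥ,p̂}(x,y) − Att_{h,p}(x,y)| ≤ 2·L_logit·(Δ(x,y) + sup_z Δ(x,z))·Att_{h,p}(x,y). -/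

import Mathlib

lemma exp_le_one_add_two_mul {u : ℝ} (h0 : 0 ≤ u) (h1 : u ≤ 1) :
    Real.exp u ≤ 1 + 2 * u := by
  have hc := convexOn_exp.2 (Set.mem_univ (0:ℝ)) (Set.mem_univ (1:ℝ))
    (by linarith : (0:ℝ) ≤ 1 - u) h0 (by ring)
  simp only [smul_eq_mul, mul_zero, mul_one, zero_add, Real.exp_zero] at hc
  have he : Real.exp 1 < 2.7182818286 := Real.exp_one_lt_d9
  nlinarith

lemma abs_sub_le_aux {P P' u : ℝ} (hP : 0 < P) (hup : P' ≤ Real.exp u * P)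
    (hlo : Real.exp (-u) * P ≤ P') (h0 : 0 ≤ u) (h1 : u ≤ 1) :
    |P' - P| ≤ 2 * u * P := by
  have hexp2 := exp_le_one_add_two_mul h0 h1
  have hexpneg : 1 - u ≤ Real.exp (-u) := by
    have := Real.add_one_le_exp (-u); linarith
  rw [abs_le]
  constructor
  · nlinarith [mul_nonneg h0 hP.le, mul_le_mul_of_nonneg_right hexpneg hP.le]
  · nlinarith [mul_nonneg h0 hP.le, mul_le_mul_of_nonneg_right hexp2 hP.le]

open MeasureTheory

/-- Attention perturbation bound: with `Δ(x,y) = ‖h(x)−h'(x)‖ + ‖h(y)−h'(y)‖ +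
‖p(x,y)−p'(x,y)‖` and `sup Δ ≤ 1/(2·L_logit)`, the softmax attention kernels satisfy
`|Att_{h',p'}(x,y) − Att_{h,p}(x,y)| ≤ 2·L_logit·(Δ(x,y) + sup_z Δ(x,z))·Att_{h,p}(x,y)`. -/
theorem stmt6
    {χ : Type*} [MeasurableSpace χ]
    (μ : Measure χ) [IsProbabilityMeasure μ]
    (dh dp : ℕ)
    (logit : EuclideanSpace ℝ (Fin dh) → EuclideanSpace ℝ (Fin dh) →
      EuclideanSpace ℝ (Fin dp) → ℝ)
    (Llogit : ℝ) (hLlogit : 0 ≤ Llogit)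
    (hlogit : ∀ a b c a' b' c', |logit a b c - logit a' b' c'| ≤
      Llogit * (‖a - a'‖ + ‖b - b'‖ + ‖c - c'‖))
    (h h' : χ → EuclideanSpace ℝ (Fin dh))
    (p p' : χ → χ → EuclideanSpace ℝ (Fin dp))
    (hhmeas : Measurable h) (hh'meas : Measurable h')
    (hhbdd : ∃ M : ℝ, ∀ x, ‖h x‖ ≤ M) (hh'bdd : ∃ M : ℝ, ∀ x, ‖h' x‖ ≤ M)
    (hpmeas : Measurable fun q : χ × χ => p q.1 q.2)
    (hp'meas : Measurable fun q : χ × χ => p' q.1 q.2)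
    (hpbdd : ∃ M : ℝ, ∀ x y, ‖p x y‖ ≤ M) (hp'bdd : ∃ M : ℝ, ∀ x y, ‖p' x y‖ ≤ M)
    (hsmall : (⨆ q : χ × χ,
        (‖h q.1 - h' q.1‖ + ‖h q.2 - h' q.2‖ + ‖p q.1 q.2 - p' q.1 q.2‖)) ≤
      1 / (2 * Llogit)) :
    ∀ x y : χ,
      |(Real.exp (logit (h' x) (h' y) (p' x y)) /
          ∫ z, Real.exp (logit (h' x) (h' z) (p' x z)) ∂μ) -
        (Real.exp (logit (h x) (h y) (p x y)) /
          ∫ z, Real.exp (logit (h x) (h z) (p x z)) ∂μ)| ≤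
      2 * Llogit *
        ((‖h x - h' x‖ + ‖h y - h' y‖ + ‖p x y - p' x y‖) +
          ⨆ z, (‖h x - h' x‖ + ‖h z - h' z‖ + ‖p x z - p' x z‖)) *
        (Real.exp (logit (h x) (h y) (p x y)) /
          ∫ z, Real.exp (logit (h x) (h z) (p x z)) ∂μ) := by
  intro x y
  have hne : Nonempty χ := ⟨x⟩
  obtain ⟨Mh, hMh⟩ := hhbdd
  obtain ⟨Mh', hMh'⟩ := hh'bdd
  obtain ⟨Mp, hMp⟩ := hpbdd
  obtain ⟨Mp', hMp'⟩ := hp'bdd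
  -- continuity of logit
  have hcont : Continuous fun t : EuclideanSpace ℝ (Fin dh) ×
      EuclideanSpace ℝ (Fin dh) × EuclideanSpace ℝ (Fin dp) =>
      logit t.1 t.2.1 t.2.2 := by
    refine (LipschitzWith.of_dist_le_mul (K := ⟨3 * Llogit + 1, by positivity⟩) ?_).continuous
    intro t t'
    have h1 : dist t.1 t'.1 ≤ dist t t' := by
      rw [Prod.dist_eq]; exact le_max_left _ _
    have h2' : dist t.2 t'.2 ≤ dist t t' := by
      rw [Prod.dist_eq]; exact le_max_right _ _
    have h2 : dist t.2.1 t'.2.1 ≤ dist t t' :=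
      le_trans (by rw [Prod.dist_eq]; exact le_max_left _ _) h2'
    have h3 : dist t.2.2 t'.2.2 ≤ dist t t' :=
      le_trans (by rw [Prod.dist_eq]; exact le_max_right _ _) h2'
    have hb := hlogit t.1 t.2.1 t.2.2 t'.1 t'.2.1 t'.2.2
    rw [Real.dist_eq]
    simp only [← dist_eq_norm] at hb
    have hd : (0:ℝ) ≤ dist t t' := dist_nonneg
    refine le_trans hb ?_
    change _ ≤ (3 * Llogit + 1) * dist t t'
    nlinarith [dist_nonneg (x := t.1) (y := t'.1),
      dist_nonneg (x := t.2.1) (y := t'.2.1), dist_nonneg (x := t.2.2) (y := t'.2.2)]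
  -- generic integrability and positivity of the normalizer
  have mk : ∀ (a : EuclideanSpace ℝ (Fin dh)) (g : χ → EuclideanSpace ℝ (Fin dh))
      (q : χ → EuclideanSpace ℝ (Fin dp)) (Mg Mq : ℝ), Measurable g → Measurable q →
      (∀ z, ‖g z‖ ≤ Mg) → (∀ z, ‖q z‖ ≤ Mq) →
      Integrable (fun z => Real.exp (logit a (g z) (q z))) μ ∧
      0 < ∫ z, Real.exp (logit a (g z) (q z)) ∂μ := by
    intro a g q Mg Mq hg hq hMg hMq
    set C : ℝ := |logit 0 0 0| + Llogit * (‖a‖ + Mg + Mq) with hC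
    have habs : ∀ z, |logit a (g z) (q z)| ≤ C := by
      intro z
      have h0 := hlogit a (g z) (q z) 0 0 0
      simp only [sub_zero] at h0
      have : |logit a (g z) (q z)| ≤ |logit a (g z) (q z) - logit 0 0 0| + |logit 0 0 0| := by
        calc |logit a (g z) (q z)| = |(logit a (g z) (q z) - logit 0 0 0) + logit 0 0 0| := by
              ring_nf
          _ ≤ _ := abs_add_le _ _
      have hgz := hMg z
      have hqz := hMq z
      nlinarith [norm_nonneg (g z), norm_nonneg (q z), norm_nonneg a]
    have hmeas : Measurable fun z => Real.exp (logit a (g z) (q z)) := by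
      have : Measurable fun z => logit a (g z) (q z) :=
        hcont.measurable.comp (measurable_const.prodMk (hg.prodMk hq))
      exact this.exp
    have hint : Integrable (fun z => Real.exp (logit a (g z) (q z))) μ := by
      refine Integrable.mono' (integrable_const (Real.exp C)) hmeas.aestronglyMeasurable
        (Filter.Eventually.of_forall fun z => ?_)
      rw [Real.norm_eq_abs, abs_of_pos (Real.exp_pos _)]
      exact Real.exp_le_exp.2 (le_trans (le_abs_self _) (habs z))
    refine ⟨hint, ?_⟩
    have hlow : ∀ z, Real.exp (-C) ≤ Real.exp (logit a (g z) (q z)) := fun z =>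
      Real.exp_le_exp.2 (neg_le_of_abs_le (habs z))
    calc (0:ℝ) < Real.exp (-C) := Real.exp_pos _
      _ = ∫ _z, Real.exp (-C) ∂μ := by simp
      _ ≤ _ := integral_mono (integrable_const _) hint hlow
  obtain ⟨hintf, hZpos⟩ := mk (h x) h (fun z => p x z) Mh Mp hhmeas
    (hpmeas.comp measurable_prodMk_left) hMh (fun z => hMp x z)
  obtain ⟨hintf', hZ'pos⟩ := mk (h' x) h' (fun z => p' x z) Mh' Mp' hh'meas
    (hp'meas.comp measurable_prodMk_left) hMh' (fun z => hMp' x z)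
  set Δ : χ × χ → ℝ := fun q => ‖h q.1 - h' q.1‖ + ‖h q.2 - h' q.2‖ + ‖p q.1 q.2 - p' q.1 q.2‖
    with hΔ
  have hΔnn : ∀ q, 0 ≤ Δ q := fun q => by positivity
  have hΔbd : ∀ q : χ × χ, Δ q ≤ (Mh + Mh') + (Mh + Mh') + (Mp + Mp') := by
    intro q
    have h1 : ‖h q.1 - h' q.1‖ ≤ Mh + Mh' :=
      le_trans (norm_sub_le _ _) (add_le_add (hMh _) (hMh' _))
    have h2 : ‖h q.2 - h' q.2‖ ≤ Mh + Mh' :=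
      le_trans (norm_sub_le _ _) (add_le_add (hMh _) (hMh' _))
    have h3 : ‖p q.1 q.2 - p' q.1 q.2‖ ≤ Mp + Mp' :=
      le_trans (norm_sub_le _ _) (add_le_add (hMp _ _) (hMp' _ _))
    simp only [hΔ]
    linarith
  have hbdd1 : BddAbove (Set.range Δ) :=
    ⟨_, by rintro v ⟨q, rfl⟩; exact hΔbd q⟩
  have hbdd2 : BddAbove (Set.range fun z => Δ (x, z)) :=
    ⟨_, by rintro v ⟨z, rfl⟩; exact hΔbd (x, z)⟩
  set d : ℝ := Δ (x, y) with hdd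
  set s : ℝ := ⨆ z, Δ (x, z) with hss
  have hd_le : d ≤ 1 / (2 * Llogit) := le_trans (le_ciSup hbdd1 (x, y)) hsmall
  have hz_le : ∀ z, Δ (x, z) ≤ s := fun z => le_ciSup hbdd2 z
  have hs_le : s ≤ 1 / (2 * Llogit) :=
    ciSup_le fun z => le_trans (le_ciSup hbdd1 (x, z)) hsmall
  have hdnn : 0 ≤ d := hΔnn _
  have hsnn : 0 ≤ s := le_trans (hΔnn (x, x)) (hz_le x)
  have hLhalf : ∀ t : ℝ, 0 ≤ t → t ≤ 1 / (2 * Llogit) → Llogit * t ≤ 1 / 2 := by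
    intro t ht hle
    rcases eq_or_lt_of_le hLlogit with hL | hL
    · simp [← hL]
    · calc Llogit * t ≤ Llogit * (1 / (2 * Llogit)) :=
            mul_le_mul_of_nonneg_left hle hLlogit
        _ = 1 / 2 := by
          have hne0 : Llogit ≠ 0 := hL.ne'
          field_simp
  have hLd := hLhalf d hdnn hd_le
  have hLs := hLhalf s hsnn hs_le
  -- key pointwise comparisons
  have key : ∀ a b c a' b' c', logit a' b' c' ≤ logit a b c +
      Llogit * (‖a - a'‖ + ‖b - b'‖ + ‖c - c'‖) := by
    intro a b c a' b' c'
    have := hlogit a' b' c' a b c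
    have habs := le_of_abs_le this
    have e1 : ‖a' - a‖ = ‖a - a'‖ := norm_sub_rev _ _
    have e2 : ‖b' - b‖ = ‖b - b'‖ := norm_sub_rev _ _
    have e3 : ‖c' - c‖ = ‖c - c'‖ := norm_sub_rev _ _
    rw [e1, e2, e3] at habs
    linarith
  set fz : χ → ℝ := fun z => Real.exp (logit (h x) (h z) (p x z)) with hfz
  set fz' : χ → ℝ := fun z => Real.exp (logit (h' x) (h' z) (p' x z)) with hfz'
  set Z : ℝ := ∫ z, fz z ∂μ with hZ
  set Z' : ℝ := ∫ z, fz' z ∂μ with hZ'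
  set A : ℝ := Real.exp (logit (h x) (h y) (p x y)) with hA
  set A' : ℝ := Real.exp (logit (h' x) (h' y) (p' x y)) with hA'
  have cmp : ∀ z t, Δ (x, z) ≤ t → fz' z ≤ Real.exp (Llogit * t) * fz z ∧
      fz z ≤ Real.exp (Llogit * t) * fz' z := by
    intro z t hzt
    have htn : Llogit * Δ (x, z) ≤ Llogit * t := mul_le_mul_of_nonneg_left hzt hLlogit
    constructor
    · have := key (h x) (h z) (p x z) (h' x) (h' z) (p' x z)
      calc fz' z ≤ Real.exp (logit (h x) (h z) (p x z) + Llogit * Δ (x, z)) :=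
            Real.exp_le_exp.2 (by simpa [hΔ] using this)
        _ ≤ Real.exp (Llogit * t) * fz z := by
            rw [Real.exp_add]; rw [mul_comm]
            exact mul_le_mul_of_nonneg_right (Real.exp_le_exp.2 htn) (Real.exp_pos _).le
    · have := key (h' x) (h' z) (p' x z) (h x) (h z) (p x z)
      have e1 : ‖h' x - h x‖ = ‖h x - h' x‖ := norm_sub_rev _ _
      have e2 : ‖h' z - h z‖ = ‖h z - h' z‖ := norm_sub_rev _ _
      have e3 : ‖p' x z - p x z‖ = ‖p x z - p' x z‖ := norm_sub_rev _ _
      rw [e1, e2, e3] at this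
      calc fz z ≤ Real.exp (logit (h' x) (h' z) (p' x z) + Llogit * Δ (x, z)) :=
            Real.exp_le_exp.2 (by simpa [hΔ] using this)
        _ ≤ Real.exp (Llogit * t) * fz' z := by
            rw [Real.exp_add]; rw [mul_comm]
            exact mul_le_mul_of_nonneg_right (Real.exp_le_exp.2 htn) (Real.exp_pos _).le
  have hAcmp := cmp y d (by simp [hdd])
  have hA1 : A' ≤ Real.exp (Llogit * d) * A := hAcmp.1
  have hA2 : A ≤ Real.exp (Llogit * d) * A' := hAcmp.2
  have hZ1 : Z' ≤ Real.exp (Llogit * s) * Z := by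
    calc Z' ≤ ∫ z, Real.exp (Llogit * s) * fz z ∂μ :=
          integral_mono hintf' (hintf.const_mul _) fun z => (cmp z s (hz_le z)).1
      _ = Real.exp (Llogit * s) * Z := integral_const_mul _ _
  have hZ2 : Z ≤ Real.exp (Llogit * s) * Z' := by
    calc Z ≤ ∫ z, Real.exp (Llogit * s) * fz' z ∂μ :=
          integral_mono hintf (hintf'.const_mul _) fun z => (cmp z s (hz_le z)).2
      _ = Real.exp (Llogit * s) * Z' := integral_const_mul _ _
  set u : ℝ := Llogit * (d + s) with hu
  have hunn : 0 ≤ u := by positivity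
  have hu1 : u ≤ 1 := by
    rw [hu, mul_add]
    calc Llogit * d + Llogit * s ≤ 1 / 2 + 1 / 2 := add_le_add hLd hLs
      _ = 1 := by norm_num
  have husplit : Real.exp u = Real.exp (Llogit * d) * Real.exp (Llogit * s) := by
    rw [← Real.exp_add, hu, mul_add]
  have hApos : 0 < A := Real.exp_pos _
  have hA'pos : 0 < A' := Real.exp_pos _
  have hBpos : 0 < A / Z := div_pos hApos hZpos
  have hB'pos : 0 < A' / Z' := div_pos hA'pos hZ'pos
  -- ratio comparison
  have ratio : ∀ (a a' z z' : ℝ), 0 < a → 0 < z → 0 < z' →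
      a' ≤ Real.exp (Llogit * d) * a → z ≤ Real.exp (Llogit * s) * z' →
      a' / z' ≤ Real.exp u * (a / z) := by
    intro a a' z z' ha hz hz' h1 h2
    have hz'' : Real.exp (-(Llogit * s)) * z ≤ z' := by
      rw [Real.exp_neg]
      rw [inv_mul_le_iff₀ (Real.exp_pos _)]
      linarith
    calc a' / z' ≤ (Real.exp (Llogit * d) * a) / (Real.exp (-(Llogit * s)) * z) := by
          apply div_le_div₀ (by positivity) h1 (by positivity) hz''
      _ = Real.exp u * (a / z) := by
          rw [husplit, Real.exp_neg]
          field_simp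
  have hup : A' / Z' ≤ Real.exp u * (A / Z) := ratio A A' Z Z' hApos hZpos hZ'pos hA1 hZ2
  have hlo : A / Z ≤ Real.exp u * (A' / Z') := ratio A' A Z' Z hA'pos hZ'pos hZpos hA2 hZ1
  have hlo' : Real.exp (-u) * (A / Z) ≤ A' / Z' := by
    rw [Real.exp_neg, inv_mul_le_iff₀ (Real.exp_pos _)]
    linarith
  have hfinal : |A' / Z' - A / Z| ≤ 2 * u * (A / Z) :=
    abs_sub_le_aux hBpos hup hlo' hunn hu1
  calc |A' / Z' - A / Z| ≤ 2 * u * (A / Z) := hfinal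
    _ = 2 * Llogit * (d + s) * (A / Z) := by rw [hu]; ring
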